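/- The map I − T_GT^(K) is demiclosed at 0: if a sequence (x_n) in R^L converges to x_* and x_n − T_GT^(K)(x_n) → 0, then x_* is a fixed point of T_GT^(K), i.e., x_* has at most K nonzero components. -/

import Mathlib

open Filter Topology

/-- `I − T_GT^(K)` is demiclosed at `0`: if `x_n → x_*` and
`x_n − T_GT^(K)(x_n) → 0`, then `x_*` is a fixed point of `T_GT^(K)`, i.e. `x_*` has
at most `K` nonzero components. -/
theorem gt_demiclosed_at_zero
    (L K : ℕ) (hL : 2 ≤ L) (hK1 : 1 ≤ K) (hKL : K ≤ L - 1)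
    (Jsel : (Fin L → ℝ) → Finset (Fin L))
    (hJcard : ∀ x, (Jsel x).card = K)
    (hJsel : ∀ x : Fin L → ℝ, ∀ l ∈ Jsel x, ∀ l' ∉ Jsel x,
      |x l'| < |x l| ∨ (|x l'| = |x l| ∧ (l : ℕ) < (l' : ℕ)))
    (shr : ℝ → ℝ)
    (hshr1 : ∀ (x : Fin L → ℝ) (τ : ℝ), (∀ l ∈ Jsel x, |τ| ≤ |x l|) → τ * shr τ ≥ 0)
    (hshr2 : ∀ (x : Fin L → ℝ) (τ : ℝ), (∀ l ∈ Jsel x, |τ| ≤ |x l|) → |shr τ| ≤ |τ|)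
    (hshr3 : ∀ ε : ℝ, 0 < ε → ∃ δ : ℝ, 0 < δ ∧ ∀ (x : Fin L → ℝ) (τ : ℝ),
      (∀ l ∈ Jsel x, |τ| ≤ |x l|) → ε ≤ |τ| → |shr τ| ≤ |τ| - δ)
    -- `T` is the generalized thresholding operator `T_GT^(K)`
    (T : EuclideanSpace ℝ (Fin L) → EuclideanSpace ℝ (Fin L))
    (hT : ∀ (x : EuclideanSpace ℝ (Fin L)) (l : Fin L),
      T x l = if l ∈ Jsel x then x l else shr (x l))
    (x : ℕ → EuclideanSpace ℝ (Fin L)) (xstar : EuclideanSpace ℝ (Fin L))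
    (hconv : Tendsto x atTop (𝓝 xstar))
    (hres : Tendsto (fun n => x n - T (x n)) atTop (𝓝 0)) :
    T xstar = xstar ∧ (Finset.univ.filter fun l => xstar l ≠ 0).card ≤ K := by
  -- coordinate bound by the norm
  have habs : ∀ (v : EuclideanSpace ℝ (Fin L)) (l : Fin L), |v l| ≤ ‖v‖ := by
    intro v l
    rw [EuclideanSpace.norm_eq, ← Real.sqrt_sq_eq_abs]
    apply Real.sqrt_le_sqrt
    simpa using Finset.single_le_sum (f := fun i => (v i) ^ 2)
      (fun i _ => sq_nonneg _) (Finset.mem_univ l)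
  -- key claim : every coordinate outside Jsel xstar vanishes
  have key : ∀ l' : Fin L, l' ∉ Jsel xstar → xstar l' = 0 := by
    intro l' hl'
    by_contra hne
    set S : Finset (Fin L) := insert l' (Jsel xstar) with hS
    have hScard : S.card = K + 1 := by
      rw [hS, Finset.card_insert_of_notMem hl', hJcard]
    have hSne : ∀ l ∈ S, xstar l ≠ 0 := by
      intro l hl
      rcases Finset.mem_insert.1 hl with h | h
      · rwa [h]
      · intro h0
        have := hJsel xstar l h l' hl'
        have h1 : |xstar l'| ≤ |xstar l| := by
          rcases this with h2 | ⟨h2, _⟩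
          · exact le_of_lt h2
          · exact le_of_eq h2
        rw [h0, abs_zero] at h1
        exact hne (abs_eq_zero.mp (le_antisymm h1 (abs_nonneg _)))
    have hSnonempty : S.Nonempty := ⟨l', Finset.mem_insert_self _ _⟩
    set ε : ℝ := S.inf' hSnonempty (fun l => |xstar l|) with hε
    have hεpos : 0 < ε := by
      rw [hε, Finset.lt_inf'_iff]
      intro l hl
      exact abs_pos.mpr (hSne l hl)
    obtain ⟨δ, hδpos, hδ⟩ := hshr3 (ε / 2) (by linarith)
    -- eventually ‖x n - xstar‖ < ε/2 and ‖x n - T (x n)‖ < δ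
    have h1 : ∀ᶠ n in atTop, ‖x n - xstar‖ < ε / 2 := by
      have := (tendsto_iff_norm_sub_tendsto_zero.mp hconv)
      exact this.eventually (eventually_lt_nhds (by linarith : (0:ℝ) < ε / 2))
    have h2 : ∀ᶠ n in atTop, ‖x n - T (x n)‖ < δ := by
      have : Tendsto (fun n => ‖x n - T (x n)‖) atTop (𝓝 0) := by
        simpa using hres.norm
      exact this.eventually (eventually_lt_nhds hδpos)
    obtain ⟨n, hn1, hn2⟩ := (h1.and h2).exists
    -- every coordinate in S is large at time n
    have hbig : ∀ l ∈ S, ε / 2 ≤ |x n l| := by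
      intro l hl
      have hd : |x n l - xstar l| < ε / 2 := by
        have : |(x n - xstar) l| ≤ ‖x n - xstar‖ := habs _ l
        simp only [PiLp.sub_apply] at this
        linarith
      have hlow : ε ≤ |xstar l| := Finset.inf'_le _ hl
      have := abs_sub_abs_le_abs_sub (xstar l) (x n l)
      rw [abs_sub_comm] at hd
      linarith
    -- pigeonhole : some l ∈ S lies outside Jsel (x n)
    have hcard : (Jsel (x n)).card < S.card := by
      rw [hScard, hJcard]; omega
    have hns : ¬ S ⊆ Jsel (x n) := fun h => absurd (Finset.card_le_card h) (by omega)
    obtain ⟨l, hlS, hlJ⟩ := Finset.not_subset.mp hns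
    -- shrinkage bound at coordinate l
    have hcond : ∀ j ∈ Jsel (x n), |x n l| ≤ |x n j| := by
      intro j hj
      rcases hJsel (x n) j hj l hlJ with h | ⟨h, _⟩
      · exact le_of_lt h
      · exact le_of_eq h
    have hshrb : |shr (x n l)| ≤ |x n l| - δ := hδ (x n) (x n l) hcond (hbig l hlS)
    have hcoord : |(x n - T (x n)) l| ≤ ‖x n - T (x n)‖ := habs _ l
    have hTl : T (x n) l = shr (x n l) := by rw [hT]; simp [hlJ]
    have : δ ≤ |x n l - shr (x n l)| := by
      have := abs_sub_abs_le_abs_sub (x n l) (shr (x n l))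
      linarith
    simp only [PiLp.sub_apply, hTl] at hcoord
    linarith
  -- support is contained in Jsel xstar
  have hsub : (Finset.univ.filter fun l => xstar l ≠ 0) ⊆ Jsel xstar := by
    intro l hl
    simp only [Finset.mem_filter] at hl
    by_contra h
    exact hl.2 (key l h)
  have hshr0 : shr 0 = 0 := by
    have := hshr2 xstar 0 (fun l _ => by simp [abs_nonneg])
    simpa [abs_nonpos_iff] using this
  constructor
  · ext l
    rw [hT]
    split
    · rfl
    · rename_i h
      rw [key l h, hshr0]
  · calc (Finset.univ.filter fun l => xstar l ≠ 0).card
        ≤ (Jsel xstar).card := Finset.card_le_card hsub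
      _ = K := hJcard _
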